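/- A subset S ⊆ A* is a semaphore code (i.e., of the form XA* \ A⁺XA* for some X ⊆ A*) if and only if S is a suffix code and SA ⊆ A*S. -/
import Mathlib


/-- A suffix code: an antichain with respect to the suffix order (possibly empty). -/
def SuffixCode {A : Type*} (S : Set (List A)) : Prop :=
  ∀ u ∈ S, ∀ v ∈ S, u <:+ v → u = v

/-- The set `X A* \ A⁺ X A*`. -/
def semCodeOf {A : Type*} (X : Set (List A)) : Set (List A) :=
  {w | ∃ x ∈ X, ∃ u : List A, w = x ++ u} \
    {w | ∃ v : List A, v ≠ [] ∧ ∃ x ∈ X, ∃ u : List A, w = v ++ x ++ u}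

/-- Every word in `X A*` has a suffix in the semaphore code of `X`. -/
lemma exists_semCode_suffix {A : Type*} (X : Set (List A)) :
    ∀ n (w : List A), w.length ≤ n → (∃ x ∈ X, ∃ u : List A, w = x ++ u) →
      ∃ t ∈ semCodeOf X, t <:+ w := by
  intro n
  induction n with
  | zero =>
    intro w hw hmem
    by_cases hbad : w ∈ {w | ∃ v : List A, v ≠ [] ∧ ∃ x ∈ X, ∃ u : List A, w = v ++ x ++ u}
    · obtain ⟨v, hv, x, hx, u, rfl⟩ := hbad
      simp at hw
      exact absurd hw.1 hv
    · exact ⟨w, ⟨hmem, hbad⟩, List.suffix_refl w⟩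
  | succ n ih =>
    intro w hw hmem
    by_cases hbad : w ∈ {w | ∃ v : List A, v ≠ [] ∧ ∃ x ∈ X, ∃ u : List A, w = v ++ x ++ u}
    · obtain ⟨v, hv, x, hx, u, rfl⟩ := hbad
      have hlen : (x ++ u).length ≤ n := by
        have : 0 < v.length := List.length_pos_iff.2 hv
        simp [List.length_append] at hw ⊢
        omega
      obtain ⟨t, ht, hsuf⟩ := ih (x ++ u) hlen ⟨x, hx, u, rfl⟩
      exact ⟨t, ht, hsuf.trans ⟨v, by simp⟩⟩
    · exact ⟨w, ⟨hmem, hbad⟩, List.suffix_refl w⟩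

/-- If `S` satisfies `S A ⊆ A* S`, then every word in `S A*` has a suffix in `S`. -/
lemma exists_suffix_of_prop {A : Type*} {S : Set (List A)}
    (hP : ∀ s ∈ S, ∀ a : A, ∃ t ∈ S, t <:+ s ++ [a])
    {x : List A} (hx : x ∈ S) (u : List A) : ∃ t ∈ S, t <:+ x ++ u := by
  induction u using List.reverseRecOn with
  | nil => exact ⟨x, hx, by simp⟩
  | append_singleton u a ih =>
    obtain ⟨t, ht, v, hv⟩ := ih
    obtain ⟨t', ht', hs'⟩ := hP t ht a
    refine ⟨t', ht', hs'.trans ⟨v, ?_⟩⟩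
    rw [← List.append_assoc, hv, List.append_assoc]

/-- `S ⊆ A*` is a semaphore code (of the form `X A* \ A⁺ X A*` for some
`X ⊆ A*`) if and only if `S` is a suffix code and `S A ⊆ A* S`. -/
theorem semaphore_iff_suffixCode {A : Type*} [Fintype A] [Nonempty A]
    (S : Set (List A)) :
    (∃ X : Set (List A), S = semCodeOf X) ↔
      (SuffixCode S ∧ ∀ s ∈ S, ∀ a : A, ∃ t ∈ S, t <:+ s ++ [a]) := by
  constructor
  · rintro ⟨X, rfl⟩
    constructor
    · rintro u ⟨⟨x, hx, p, rfl⟩, -⟩ v ⟨-, hv2⟩ ⟨w, rfl⟩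
      rcases eq_or_ne w [] with rfl | hw
      · simp
      · exact absurd ⟨w, hw, x, hx, p, by simp⟩ hv2
    · rintro s ⟨⟨x, hx, p, rfl⟩, -⟩ a
      exact exists_semCode_suffix X ((x ++ p) ++ [a]).length _ le_rfl
        ⟨x, hx, p ++ [a], by simp⟩
  · rintro ⟨hsuf, hP⟩
    refine ⟨S, Set.eq_of_subset_of_subset ?_ ?_⟩
    · intro w hw
      refine ⟨⟨w, hw, [], by simp⟩, ?_⟩
      rintro ⟨v, hv, x, hx, u, rfl⟩
      obtain ⟨t, ht, hts⟩ := exists_suffix_of_prop hP hx u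
      have htw : t <:+ v ++ x ++ u := hts.trans ⟨v, by simp⟩
      have := hsuf t ht _ hw htw
      subst this
      have h1 := hts.length_le
      have h2 : 0 < v.length := List.length_pos_iff.2 hv
      simp only [List.length_append] at h1
      omega
    · rintro w ⟨⟨x, hx, u, rfl⟩, hbad⟩
      obtain ⟨t, ht, v, hv⟩ := exists_suffix_of_prop hP hx u
      rcases eq_or_ne v [] with rfl | hvne
      · simpa [← hv] using ht
      · exact absurd ⟨v, hvne, t, ht, [], by simp [← hv]⟩ hbad
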